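/- Let A be an abelian category with enough projectives and T a tilting subcategory (weak tilting and contravariantly finite). Then (Fac T, T⊥) is a torsion pair in A, where T⊥ = {A : Hom(T, A) = 0 for all T ∈ T}. -/

import Mathlib

open CategoryTheory Category Limits

attribute [local instance] CategoryTheory.Abelian.hasFiniteBiproducts
attribute [local instance] CategoryTheory.Limits.HasFiniteBiproducts.of_hasFiniteProducts

universe w v u

namespace Paper

variable {A : Type u} [Category.{v} A] [Abelian A]

/-- `IsSes i p` expresses that `0 ⟶ X ⟶ Y ⟶ Z ⟶ 0` is a short exact sequence. -/
def IsSes {X Y Z : A} (i : X ⟶ Y) (p : Y ⟶ Z) : Prop :=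
  ∃ w : i ≫ p = 0, (ShortComplex.mk i p w).ShortExact

/-- `Ext¹(X, Y) = 0`, phrased as: every extension of `X` by `Y` splits. -/
def Ext1Zero (X Y : A) : Prop :=
  ∀ ⦃E : A⦄ (i : Y ⟶ E) (p : E ⟶ X), IsSes i p → ∃ s : X ⟶ E, s ≫ p = 𝟙 X

/-- A torsion pair `(T, F)` of (strictly full) subcategories of an abelian category. -/
structure IsTorsionPair (T F : Set A) : Prop where
  isoClosed_torsion : ∀ {X Y : A}, (X ≅ Y) → X ∈ T → Y ∈ T
  isoClosed_torsionFree : ∀ {X Y : A}, (X ≅ Y) → X ∈ F → Y ∈ F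
  hom_zero : ∀ {X Y : A}, X ∈ T → Y ∈ F → ∀ f : X ⟶ Y, f = 0
  seq : ∀ X : A, ∃ (tX fX : A) (i : tX ⟶ X) (p : X ⟶ fX), tX ∈ T ∧ fX ∈ F ∧ IsSes i p

/-- A (complete) cotorsion pair `(C, D)` in an abelian category. -/
structure IsCotorsionPair (C D : Set A) : Prop where
  left_eq : C = {X : A | ∀ Y ∈ D, Ext1Zero X Y}
  right_eq : D = {Y : A | ∀ X ∈ C, Ext1Zero X Y}
  seq₁ : ∀ X : A, ∃ (dX cX : A) (i : dX ⟶ cX) (p : cX ⟶ X), dX ∈ D ∧ cX ∈ C ∧ IsSes i p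
  seq₂ : ∀ X : A, ∃ (dX cX : A) (i : X ⟶ dX) (p : dX ⟶ cX), dX ∈ D ∧ cX ∈ C ∧ IsSes i p

/-- `f` factors through some object belonging to the class `P`. -/
def FactorsThroughClass (P : Set A) {X Y : A} (f : X ⟶ Y) : Prop :=
  ∃ (Z : A) (_ : Z ∈ P) (a : X ⟶ Z) (b : Z ⟶ Y), a ≫ b = f

/-- The hom-relation on the full subcategory on `S` identifying two morphisms whose
difference factors through an object of `P`. -/
def quotRel (S P : Set A) : HomRel (ObjectProperty.FullSubcategory (· ∈ S)) :=
  fun {X Y} f g =>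
    FactorsThroughClass P ((show X.obj ⟶ Y.obj from f.hom) - (show X.obj ⟶ Y.obj from g.hom))

/-- The additive quotient of the full subcategory on `S` by the morphisms factoring
through objects of `P`. -/
abbrev AddQuot (S P : Set A) := CategoryTheory.Quotient (quotRel S P)

/-- The subcategory of quotients of (finite direct sums of) objects of `T`. -/
def Fac (T : Set A) : Set A := {X : A | ∃ Y ∈ T, ∃ p : Y ⟶ X, Epi p}

/-- The right `Hom`-orthogonal `T^⊥`. -/
def rightHomPerp (T : Set A) : Set A := {X : A | ∀ Y ∈ T, ∀ f : Y ⟶ X, f = 0}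

/-- The left `Hom`-orthogonal `^⊥F`. -/
def leftHomPerp (F : Set A) : Set A := {X : A | ∀ Y ∈ F, ∀ f : X ⟶ Y, f = 0}

/-- The right `Ext¹`-orthogonal `T^{⊥₁}`. -/
def rightExt1Perp (T : Set A) : Set A := {X : A | ∀ Y ∈ T, Ext1Zero Y X}

/-- The left `Ext¹`-orthogonal `^{⊥₁}D`. -/
def leftExt1Perp (D : Set A) : Set A := {X : A | ∀ Y ∈ D, Ext1Zero X Y}

/-- `X` has projective dimension at most one: it has a length-one projective resolution. -/
def PdLeOne (X : A) : Prop :=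
  ∃ (P₁ P₀ : A) (i : P₁ ⟶ P₀) (p : P₀ ⟶ X), Projective P₁ ∧ Projective P₀ ∧ IsSes i p

/-- A weak tilting subcategory of an abelian category with enough projectives. -/
structure IsWeakTilting (T : Set A) : Prop where
  sum_mem : ∀ {X Y : A}, X ∈ T → Y ∈ T → (X ⊞ Y) ∈ T
  summand_mem : ∀ {X Y : A}, X ∈ T → (∃ (s : Y ⟶ X) (r : X ⟶ Y), s ≫ r = 𝟙 Y) → Y ∈ T
  ext1_zero : ∀ {X Y : A}, X ∈ T → Y ∈ T → Ext1Zero X Y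
  pd_le_one : ∀ X ∈ T, PdLeOne X
  coresolution : ∀ P : A, Projective P → ∃ (T₀ T₁ : A) (i : P ⟶ T₀) (p : T₀ ⟶ T₁),
    T₀ ∈ T ∧ T₁ ∈ T ∧ IsSes i p

/-- `φ : X ⟶ E` is a right `T`-approximation of `E`. -/
def IsRightApprox (T : Set A) {X E : A} (φ : X ⟶ E) : Prop :=
  X ∈ T ∧ ∀ X' ∈ T, ∀ f : X' ⟶ E, ∃ g : X' ⟶ X, g ≫ φ = f

/-- A tilting subcategory: a weak tilting subcategory that is contravariantly finite. -/
structure IsTilting (T : Set A) extends IsWeakTilting T : Prop where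
  contravariantly_finite : ∀ E : A, ∃ (X : A) (φ : X ⟶ E), IsRightApprox T φ


section Auxiliary

lemma IsSes.w' {X Y Z : A} {i : X ⟶ Y} {p : Y ⟶ Z} (h : IsSes i p) : i ≫ p = 0 :=
  h.choose

lemma IsSes.mono_left {X Y Z : A} {i : X ⟶ Y} {p : Y ⟶ Z} (h : IsSes i p) : Mono i :=
  h.choose_spec.mono_f

lemma IsSes.epi_right {X Y Z : A} {i : X ⟶ Y} {p : Y ⟶ Z} (h : IsSes i p) : Epi p :=
  h.choose_spec.epi_g

lemma IsSes.lift' {X Y Z W : A} {i : X ⟶ Y} {p : Y ⟶ Z} (h : IsSes i p)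
    (k : W ⟶ Y) (hk : k ≫ p = 0) : ∃ l : W ⟶ X, l ≫ i = k := by
  obtain ⟨w, hS⟩ := h
  have := hS.mono_f
  exact hS.exact.lift' k hk

/-- Pulling back a short exact sequence along a map into the cokernel. -/
lemma isSes_pullback {K X C T' : A} {i : K ⟶ X} {π : X ⟶ C} (h : IsSes i π) (f : T' ⟶ C) :
    IsSes (pullback.lift i 0 (by rw [h.w', zero_comp]) : K ⟶ pullback π f)
      (pullback.snd π f) := by
  have hmi : Mono i := h.mono_left
  have hep : Epi π := h.epi_right
  have hw : (pullback.lift i 0 (by rw [h.w', zero_comp]) : K ⟶ pullback π f) ≫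
      pullback.snd π f = 0 := pullback.lift_snd _ _ _
  refine ⟨hw, ?_⟩
  have hm : Mono (pullback.lift i 0 (by rw [h.w', zero_comp]) : K ⟶ pullback π f) :=
    mono_of_mono_fac (pullback.lift_fst i 0 (by rw [h.w', zero_comp]))
  have he : Epi (pullback.snd π f) := Abelian.epi_pullback_of_epi_f π f
  refine ShortComplex.ShortExact.mk' ?_ hm he
  apply ShortComplex.exact_of_f_is_kernel
  refine KernelFork.IsLimit.ofι _ _ (fun {W} k hk => ?_) (fun {W} k hk => ?_)
    (fun {W} k hk m hm' => ?_)
  · -- a lift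
    have h1 : (k ≫ pullback.fst π f) ≫ π = 0 := by
      rw [assoc, pullback.condition, ← assoc, hk, zero_comp]
    exact (h.lift' (k ≫ pullback.fst π f) h1).choose
  · -- factorization
    have h1 : (k ≫ pullback.fst π f) ≫ π = 0 := by
      rw [assoc, pullback.condition, ← assoc, hk, zero_comp]
    apply pullback.hom_ext
    · rw [assoc, pullback.lift_fst, (h.lift' (k ≫ pullback.fst π f) h1).choose_spec]
    · rw [assoc, pullback.lift_snd, comp_zero, hk]
  · -- uniqueness
    have h1 : (k ≫ pullback.fst π f) ≫ π = 0 := by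
      rw [assoc, pullback.condition, ← assoc, hk, zero_comp]
    have h2 : m ≫ i = k ≫ pullback.fst π f := by
      rw [← hm', assoc, pullback.lift_fst]
    rw [← cancel_mono i, h2, (h.lift' (k ≫ pullback.fst π f) h1).choose_spec]

/-- Pushing out a short exact sequence along a map out of the kernel. -/
lemma isSes_pushout {P₁ P₀ T' X₀ : A} {i : P₁ ⟶ P₀} {p : P₀ ⟶ T'} (h : IsSes i p)
    (β : P₁ ⟶ X₀) :
    IsSes (pushout.inr i β)
      (pushout.desc p 0 (by rw [h.w', comp_zero]) : pushout i β ⟶ T') := by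
  have hmi : Mono i := h.mono_left
  have hep : Epi p := h.epi_right
  have hw : pushout.inr i β ≫ (pushout.desc p 0 (by rw [h.w', comp_zero])) = 0 :=
    pushout.inr_desc _ _ _
  refine ⟨hw, ?_⟩
  have hS : Epi p := h.epi_right
  have hm : Mono (pushout.inr i β) := Abelian.mono_pushout_of_mono_f i β
  have he : Epi (pushout.desc p 0 (by rw [h.w', comp_zero]) : pushout i β ⟶ T') :=
    epi_of_epi_fac (pushout.inl_desc p 0 (by rw [h.w', comp_zero]))
  refine ShortComplex.ShortExact.mk' ?_ hm he
  apply ShortComplex.exact_of_g_is_cokernel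
  have hSE := h.choose_spec
  have := hSE.epi_g
  refine CokernelCofork.IsColimit.ofπ _ _ (fun {W} k hk => ?_) (fun {W} k hk => ?_)
    (fun {W} k hk m hm' => ?_)
  · -- a descent
    have h1 : i ≫ (pushout.inl i β ≫ k) = 0 := by
      rw [← assoc, pushout.condition, assoc, hk, comp_zero]
    exact (hSE.exact.desc' (pushout.inl i β ≫ k) h1).choose
  · -- factorization
    have h1 : i ≫ (pushout.inl i β ≫ k) = 0 := by
      rw [← assoc, pushout.condition, assoc, hk, comp_zero]
    apply pushout.hom_ext
    · rw [← assoc, pushout.inl_desc, (hSE.exact.desc' (pushout.inl i β ≫ k) h1).choose_spec]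
    · rw [← assoc, pushout.inr_desc, zero_comp, hk]
  · -- uniqueness
    have h1 : i ≫ (pushout.inl i β ≫ k) = 0 := by
      rw [← assoc, pushout.condition, assoc, hk, comp_zero]
    have h2 : p ≫ m = pushout.inl i β ≫ k := by
      rw [← hm', ← assoc, pushout.inl_desc]
    rw [← cancel_epi p, h2, (hSE.exact.desc' (pushout.inl i β ≫ k) h1).choose_spec]

/-- If `Ext¹(T', X₀) = 0`, `T'` has projective dimension at most one, and `Q` is a
quotient of `X₀`, then `Ext¹(T', Q) = 0`. -/
lemma ext1Zero_of_epi {T' X₀ Q : A} (hpd : PdLeOne T') (hext : Ext1Zero T' X₀)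
    (π : X₀ ⟶ Q) (hπ : Epi π) : Ext1Zero T' Q := by
  intro E ι pE hses
  obtain ⟨P₁, P₀, i, p, hP₁, hP₀, hps⟩ := hpd
  have hepE : Epi pE := hses.epi_right
  -- lift `p` through the epi `pE`
  obtain ⟨e, he⟩ : ∃ e : P₀ ⟶ E, e ≫ pE = p :=
    ⟨Projective.factorThru p pE, Projective.factorThru_comp _ _⟩
  have h1 : (i ≫ e) ≫ pE = 0 := by rw [assoc, he, hps.w']
  obtain ⟨α, hα⟩ := hses.lift' (i ≫ e) h1
  obtain ⟨β, hβ⟩ : ∃ β : P₁ ⟶ X₀, β ≫ π = α :=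
    ⟨Projective.factorThru α π, Projective.factorThru_comp _ _⟩
  -- push out the projective resolution of `T'` along `β`
  have hpo := isSes_pushout hps β
  obtain ⟨s, hs⟩ := hext _ _ hpo
  -- the comparison map `pushout i β ⟶ E`
  have hcomm : i ≫ e = β ≫ (π ≫ ι) := by rw [← assoc, hβ, hα]
  refine ⟨s ≫ pushout.desc e (π ≫ ι) hcomm, ?_⟩
  have hu : pushout.desc e (π ≫ ι) hcomm ≫ pE =
      pushout.desc p 0 (by rw [hps.w', comp_zero]) := by
    apply pushout.hom_ext
    · rw [← assoc, pushout.inl_desc, pushout.inl_desc, he]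
    · rw [← assoc, pushout.inr_desc, pushout.inr_desc, assoc, hses.w', comp_zero]
  rw [assoc, hu, hs]

end Auxiliary

/-- For a tilting subcategory `T` of an abelian category with enough
projectives, `(Fac T, T^⊥)` is a torsion pair. -/
theorem statement11 [EnoughProjectives A] {T : Set A} (hT : IsTilting T) :
    IsTorsionPair (Fac T) (rightHomPerp T) := by
  constructor
  · -- `Fac T` is closed under isomorphisms
    rintro X Y e ⟨Z, hZ, p, hp⟩
    have := hp
    exact ⟨Z, hZ, p ≫ e.hom, epi_comp _ _⟩
  · -- `T^⊥` is closed under isomorphisms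
    rintro X Y e hX Z hZ f
    have h0 : f ≫ e.inv = 0 := hX Z hZ (f ≫ e.inv)
    calc f = (f ≫ e.inv) ≫ e.hom := by simp
    _ = 0 := by rw [h0, zero_comp]
  · -- no nonzero maps from `Fac T` to `T^⊥`
    rintro X Y ⟨Z, hZ, p, hp⟩ hY f
    have := hp
    have h0 : p ≫ f = 0 := hY Z hZ (p ≫ f)
    rw [← cancel_epi p, h0, comp_zero]
  · -- the torsion sequence
    intro X
    obtain ⟨X₀, φ, hX₀, happ⟩ := hT.contravariantly_finite X
    have hses : IsSes (Abelian.image.ι φ) (cokernel.π φ) := by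
      refine ⟨kernel.condition _, ?_⟩
      refine ShortComplex.ShortExact.mk' ?_ inferInstance inferInstance
      exact ShortComplex.exact_of_f_is_kernel _ (kernelIsKernel (cokernel.π φ))
    refine ⟨Abelian.image φ, cokernel φ, Abelian.image.ι φ, cokernel.π φ, ?_, ?_, hses⟩
    · -- the image is in `Fac T`
      exact ⟨X₀, hX₀, Abelian.factorThruImage φ, inferInstance⟩
    · -- the cokernel is in `T^⊥`
      intro T' hT' f
      -- pull back the image–cokernel sequence along `f`
      have hpb := isSes_pullback hses f
      -- `Ext¹(T', image φ) = 0`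
      have hextQ : Ext1Zero T' (Abelian.image φ) :=
        ext1Zero_of_epi (hT.pd_le_one T' hT') (hT.ext1_zero hT' hX₀)
          (Abelian.factorThruImage φ) inferInstance
      obtain ⟨s, hs⟩ := hextQ _ _ hpb
      -- the resulting map `T' ⟶ X` factors through the approximation `φ`
      obtain ⟨g, hg⟩ := happ T' hT' (s ≫ pullback.fst (cokernel.π φ) f)
      have : f = (g ≫ φ) ≫ cokernel.π φ := by
        rw [hg, assoc, pullback.condition, ← assoc, hs, id_comp]
      rw [this, assoc, cokernel.condition, comp_zero]

end Paper
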